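/- For any finitary matroids M and N on a common ground set E, there exists an (M,N)-stable set I such that every (M,N)-stable set is contained in span_M(I). -/

import Mathlib

open Set Matroid
open scoped symmDiff

namespace AZ

variable {α : Type*}

/-- The contraction `M / X`, defined (in the standard way) as the dual of the
restriction of the dual to the complement of `X`. -/
def con (M : Matroid α) (X : Set α) : Matroid α := (M✶ ↾ (M.E \ X))✶

/-- The deletion `M − X := M ↾ (E ∖ X)`. -/
def del (M : Matroid α) (X : Set α) : Matroid α := M ↾ (M.E \ X)

/-- The matroidal Hall condition `Hall(M,N)`: for every `X ⊆ E` such that `M ↾ X` has a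
base that is independent in `N.X = N/(E∖X)`, also `N.X` has a base independent in `M ↾ X`. -/
def Hall (M N : Matroid α) : Prop :=
  ∀ X ⊆ N.E,
    (∃ B, (M ↾ X).IsBase B ∧ (con N (N.E \ X)).Indep B) →
    ∃ B, (con N (N.E \ X)).IsBase B ∧ (M ↾ X).Indep B

/-- `(M,N)` is finitely matchable: every finite `F ⊆ E` is `N`-spanned by an
`M`-independent set. -/
def FinitelyMatchable (M N : Matroid α) : Prop :=
  ∀ F ⊆ M.E, F.Finite → ∃ I, M.Indep I ∧ F ⊆ N.closure I

/-- `G ⊆ E` is `(M,N)`-negligible: for all finite `X ⊆ G` and finite `Y ⊆ E ∖ G` there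
is an `M/Y`-independent set that `N`-spans `X`. -/
def Negligible (M N : Matroid α) (G : Set α) : Prop :=
  G ⊆ M.E ∧
    ∀ X ⊆ G, X.Finite → ∀ Y ⊆ M.E \ G, Y.Finite →
      ∃ I, (con M Y).Indep I ∧ X ⊆ N.closure I

/-- A common independent set `I` of `M` and `N` is `(M,N)`-stable if every `J ⊆ E ∖ I`
that is independent in `M/I` and in `N` is also independent in `N/I`. -/
def Stable (M N : Matroid α) (I : Set α) : Prop :=
  M.Indep I ∧ N.Indep I ∧
    ∀ J ⊆ M.E \ I, (con M I).Indep J → N.Indep J → (con N I).Indep J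

/-- A circuit of a matroid: a minimal dependent subset of the ground set. -/
def Circuit (M : Matroid α) (C : Set α) : Prop :=
  C ⊆ M.E ∧ ¬ M.Indep C ∧ ∀ D ⊂ C, M.Indep D

/-- The arc relation of the exchange digraph `D(I)`: for `x ∈ E ∖ I` and `y ∈ I` there is
an arc `x → y` if `x ∈ span_M(I)` and `y` lies in the unique `M`-circuit contained in
`I + x`, and an arc `y → x` if `x ∈ span_N(I)` and `y` lies in the unique `N`-circuit
contained in `I + x`. -/
def Arc (M N : Matroid α) (I : Set α) (x y : α) : Prop :=
  (x ∈ M.E \ I ∧ y ∈ I ∧ x ∈ M.closure I ∧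
    ∃ C, Circuit M C ∧ C ⊆ insert x I ∧ x ∈ C ∧ y ∈ C) ∨
  (x ∈ I ∧ y ∈ M.E \ I ∧ y ∈ N.closure I ∧
    ∃ C, Circuit N C ∧ C ⊆ insert y I ∧ y ∈ C ∧ x ∈ C)

/-- `Reach M N I x` is `E(x,I)`: the set of elements reachable from `x` by a directed
path in `D(I)`. -/
def Reach (M N : Matroid α) (I : Set α) (x : α) : Set α :=
  {y | Relation.ReflTransGen (Arc M N I) x y}

/-- `P = {f 0, …, f (2n)}` is an `xy`-augmenting path for `I`: it starts at
`x = f 0 ∉ span_N(I)`, ends at `y = f (2n) ∉ span_M(I)`, consecutive elements are joined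
by arcs of `D(I)`, and there are no jumping arcs. -/
def IsAugPath (M N : Matroid α) (I P : Set α) (x y : α) : Prop :=
  ∃ (n : ℕ) (f : ℕ → α),
    P = f '' Set.Iic (2 * n) ∧ P ⊆ M.E ∧ Set.InjOn f (Set.Iic (2 * n)) ∧
    f 0 = x ∧ f (2 * n) = y ∧
    x ∉ N.closure I ∧ y ∉ M.closure I ∧
    (∀ i < 2 * n, Arc M N I (f i) (f (i + 1))) ∧
    (∀ i j, i + 1 < j → j ≤ 2 * n → ¬ Arc M N I (f i) (f j))

/-- One augmentation step: `J = I △ P` for some augmenting path `P` for `I`. -/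
def AugStep (M N : Matroid α) (I J : Set α) : Prop :=
  ∃ P x y, IsAugPath M N I P x y ∧ J = I ∆ P

/-- `J ∈ A(I)`: `J` is obtained from `I` by finitely many successive augmentations. -/
def MemA (M N : Matroid α) (I J : Set α) : Prop :=
  Relation.ReflTransGen (AugStep M N) I J

/-- `O = {f 0, …, f (2n+1)}` is a switching cycle for `I`: the arcs of `D(I)` inside `O`
are exactly the arcs `f i → f (i+1 mod 2n+2)`, forming a chordless directed cycle. -/
def SwitchCycle (M N : Matroid α) (I O : Set α) : Prop :=
  ∃ (n : ℕ) (f : ℕ → α),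
    O = f '' Set.Iio (2 * n + 2) ∧ O ⊆ M.E ∧ Set.InjOn f (Set.Iio (2 * n + 2)) ∧
    ∀ i < 2 * n + 2, ∀ j < 2 * n + 2,
      (Arc M N I (f i) (f j) ↔ j = (i + 1) % (2 * n + 2))

/-- The preorder on finite common independent sets: `I ⊴ J` iff
`I ⊆ span_M(J) ∩ span_N(J)`. -/
def Le (M N : Matroid α) (I J : Set α) : Prop :=
  I ⊆ M.closure J ∩ N.closure J

/-- The equivalence relation: `I ∼ J` iff `I ⊴ J` and `J ⊴ I`. -/
def Sim (M N : Matroid α) (I J : Set α) : Prop :=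
  Le M N I J ∧ Le M N J I

/-- A family of finite common independent sets of `M` and `N` that is closed under `∼`
and is `⊴`-directed. -/
def DirFam (M N : Matroid α) (D : Set (Set α)) : Prop :=
  (∀ I ∈ D, I.Finite ∧ M.Indep I ∧ N.Indep I) ∧
  (∀ I ∈ D, ∀ J, J.Finite → M.Indep J → N.Indep J → Sim M N I J → J ∈ D) ∧
  (∀ I ∈ D, ∀ J ∈ D, ∃ K ∈ D, Le M N I K ∧ Le M N J K)

/-- A maximal directed family of finite common independent sets. -/
def MaxDirFam (M N : Matroid α) (D : Set (Set α)) : Prop :=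
  DirFam M N D ∧ ∀ D', DirFam M N D' → D ⊆ D' → D' = D

/-- Independence in the contraction `con M C` by an independent set `C`. -/
lemma con_indep_iff {M : Matroid α} {C J : Set α} (hC : M.Indep C) :
    (con M C).Indep J ↔ Disjoint J C ∧ M.Indep (J ∪ C) := by
  have hCE : C ⊆ M.E := hC.subset_ground
  have hRE : M.E \ C ⊆ M✶.E := by rw [dual_ground]; exact diff_subset
  constructor
  · rintro h
    obtain ⟨hJR, B, hB, hJB⟩ : J ⊆ M.E \ C ∧
        ∃ B, (M✶ ↾ (M.E \ C)).IsBase B ∧ Disjoint J B := h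
    rw [Matroid.isBase_restrict_iff (M := M✶) hRE] at hB
    obtain ⟨B₀, hB₀, hCB₀⟩ := hC.exists_isBase_superset
    have hdual : M✶.IsBase (M.E \ B₀) := hB₀.compl_isBase_dual
    have hBbase : M✶.IsBase B := hB.isBase_of_isBase_subset hdual (diff_subset_diff_right hCB₀)
    have hcompl : M.IsBase (M.E \ B) := hBbase.compl_isBase_of_dual
    have hBsub : B ⊆ M.E \ C := hB.subset
    refine ⟨disjoint_of_subset_left hJR disjoint_sdiff_left, hcompl.indep.subset ?_⟩
    refine union_subset (subset_diff.2 ⟨hJR.trans diff_subset, hJB⟩) ?_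
    exact subset_diff.2 ⟨hCE, ((subset_diff.1 hBsub).2).symm⟩
  · rintro ⟨hJC, hJCi⟩
    obtain ⟨B₀, hB₀, hJCB₀⟩ := hJCi.exists_isBase_superset
    have hJB₀ : J ⊆ B₀ := subset_union_left.trans hJCB₀
    have hdual : M✶.IsBase (M.E \ B₀) := hB₀.compl_isBase_dual
    have hsub : M.E \ B₀ ⊆ M.E \ C :=
      diff_subset_diff_right (subset_union_right.trans hJCB₀)
    have hbasis : M✶.IsBasis (M.E \ B₀) (M.E \ C) := by
      rw [isBasis_iff hRE]
      exact ⟨hdual.indep, hsub, fun J' hJ' hBJ' _ => hdual.eq_of_subset_indep hJ' hBJ'⟩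
    have hJE : J ⊆ M.E := hJB₀.trans hB₀.subset_ground
    exact ⟨subset_diff.2 ⟨hJE, hJC⟩, ⟨M.E \ B₀,
      (Matroid.isBase_restrict_iff (M := M✶) hRE).2 hbasis,
      Disjoint.mono_left hJB₀ disjoint_sdiff_right⟩⟩

/-- The main way stability is used. -/
lemma Stable.apply {M N : Matroid α} {I J : Set α} (h : Stable M N I)
    (hJE : J ⊆ M.E) (hJI : Disjoint J I) (hMI : M.Indep (J ∪ I)) (hNJ : N.Indep J) :
    N.Indep (J ∪ I) := by
  have h1 := h.2.2 J (subset_diff.2 ⟨hJE, hJI⟩) ((con_indep_iff h.1).2 ⟨hJI, hMI⟩) hNJ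
  exact ((con_indep_iff h.2.1).1 h1).2

lemma stable_empty (M N : Matroid α) : Stable M N ∅ :=
  ⟨M.empty_indep, N.empty_indep, fun J _ _ hN =>
    (con_indep_iff N.empty_indep).2 ⟨disjoint_empty _, by rwa [union_empty]⟩⟩

/-- A finite subset of the union of a nonempty chain lies inside some member. -/
lemma finite_subset_chain_sUnion {c : Set (Set α)} (hc : IsChain (· ⊆ ·) c)
    (hne : c.Nonempty) {F : Set α} (hF : F.Finite) (hFs : F ⊆ ⋃₀ c) : ∃ I ∈ c, F ⊆ I := by
  revert hFs
  refine Set.Finite.induction_on (motive := fun F _ => F ⊆ ⋃₀ c → ∃ I ∈ c, F ⊆ I) F hF (fun _ => ⟨hne.choose, hne.choose_spec, empty_subset _⟩) ?_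
  rintro a F haF hFfin ih hFs
  obtain ⟨I, hIc, hFI⟩ := ih ((subset_insert a F).trans hFs)
  obtain ⟨I', hI'c, haI'⟩ := hFs (mem_insert a F)
  rcases eq_or_ne I I' with rfl | hne'
  · exact ⟨I, hIc, insert_subset haI' hFI⟩
  rcases hc hIc hI'c hne' with hII' | hI'I
  · exact ⟨I', hI'c, insert_subset haI' (hFI.trans hII')⟩
  · exact ⟨I, hIc, insert_subset (hI'I haI') hFI⟩

lemma indep_sUnion_chain {M : Matroid α} [M.Finitary] {c : Set (Set α)}
    (hc : IsChain (· ⊆ ·) c) (hne : c.Nonempty) (h : ∀ I ∈ c, M.Indep I) :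
    M.Indep (⋃₀ c) := by
  refine indep_of_forall_finite_subset_indep _ fun F hFs hF => ?_
  obtain ⟨I, hIc, hFI⟩ := finite_subset_chain_sUnion hc hne hF hFs
  exact (h I hIc).subset hFI

/-- Stability is preserved by unions of nonempty chains. -/
lemma stable_sUnion_chain {M N : Matroid α} [M.Finitary] [N.Finitary] {c : Set (Set α)}
    (hc : IsChain (· ⊆ ·) c) (hne : c.Nonempty) (h : ∀ I ∈ c, Stable M N I) :
    Stable M N (⋃₀ c) := by
  have hSM : M.Indep (⋃₀ c) := indep_sUnion_chain hc hne fun I hI => (h I hI).1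
  have hSN : N.Indep (⋃₀ c) := indep_sUnion_chain hc hne fun I hI => (h I hI).2.1
  refine ⟨hSM, hSN, fun L hLE hLM hLN => ?_⟩
  obtain ⟨hLS, hMLS⟩ := (con_indep_iff hSM).1 hLM
  refine (con_indep_iff hSN).2 ⟨hLS, ?_⟩
  refine indep_of_forall_finite_subset_indep _ fun F hFs hF => ?_
  obtain ⟨I₀, hI₀c, hFI₀⟩ := finite_subset_chain_sUnion hc hne
    (hF.inter_of_left (⋃₀ c)) inter_subset_right
  have happ : N.Indep ((F ∩ L) ∪ I₀) := by
    refine (h I₀ hI₀c).apply ?_ ?_ ?_ (hLN.subset inter_subset_right)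
    · exact inter_subset_right.trans (hLE.trans diff_subset)
    · exact disjoint_of_subset inter_subset_right (subset_sUnion_of_mem hI₀c) hLS
    · exact hMLS.subset (union_subset (inter_subset_right.trans subset_union_left)
        ((subset_sUnion_of_mem hI₀c).trans subset_union_right))
  refine happ.subset fun x hx => ?_
  rcases hFs hx with hxL | hxS
  · exact Or.inl ⟨hx, hxL⟩
  · exact Or.inr (hFI₀ ⟨hx, hxS⟩)

/-- Exchange lemma: if `K ∪ L` is independent with `L` disjoint from the span of `K`,
then `J ∪ L` is independent for any independent `J` inside the span of `K`. -/
lemma indep_union_of_subset_closure {M : Matroid α} {K L J : Set α}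
    (hKL : M.Indep (K ∪ L)) (hLK : Disjoint L (M.closure K))
    (hJ : M.Indep J) (hJK : J ⊆ M.closure K) : M.Indep (J ∪ L) := by
  have hK : M.Indep K := hKL.subset subset_union_left
  obtain ⟨J', hJ'b, hJJ'⟩ := hJ.subset_isBasis_of_subset hJK (M.closure_subset_ground K)
  have hbig : M.IsBasis (K ∪ L) (M.closure K ∪ L) := by
    refine hKL.isBasis_of_subset_of_subset_closure
      (union_subset_union_left _ (M.subset_closure K hK.subset_ground)) ?_
    exact union_subset (M.closure_subset_closure subset_union_left)
      (subset_union_right.trans (M.subset_closure (K ∪ L) hKL.subset_ground))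
  obtain ⟨B, hB, hJ'B, hBsub⟩ := hJ'b.indep.exists_isBasis_subset_union_isBasis
    (hJ'b.subset.trans subset_union_left) hbig
  have hLB : L ⊆ B := by
    intro l hl
    by_contra hlB
    have hlX : l ∉ M.closure K := disjoint_left.1 hLK hl
    have hlK : l ∉ K := fun h => hlX (M.subset_closure K hK.subset_ground h)
    have hBsub' : B ⊆ M.closure K ∪ (L \ {l}) := by
      intro x hx
      rcases hBsub hx with hxJ' | hxKL
      · exact Or.inl (hJ'b.subset hxJ')
      · rcases hxKL with hxK | hxL
        · exact Or.inl (M.subset_closure K hK.subset_ground hxK)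
        · exact Or.inr ⟨hxL, fun hxl => hlB (hxl ▸ hx)⟩
    have hlcl : l ∈ M.closure (M.closure K ∪ (L \ {l})) :=
      M.closure_subset_closure hBsub' (hB.subset_closure (Or.inr hl))
    rw [closure_union_closure_left_eq] at hlcl
    have heq : K ∪ (L \ {l}) = (K ∪ L) \ {l} := by
      rw [union_diff_distrib, diff_singleton_eq_self hlK]
    rw [heq] at hlcl
    exact hKL.notMem_closure_sdiff_of_mem (Or.inr hl) hlcl
  exact hB.indep.subset (union_subset (hJJ'.trans hJ'B) hLB)

/-- There exists an `(M,N)`-stable set that `M`-spans all `(M,N)`-stable sets. -/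
theorem statement8 (M N : Matroid α) [M.Finitary] [N.Finitary] (hE : M.E = N.E) :
    ∃ I, Stable M N I ∧ ∀ J, Stable M N J → J ⊆ M.closure I := by
  have hub : ∀ c ⊆ {I | Stable M N I}, IsChain (· ⊆ ·) c →
      ∃ ub ∈ {I | Stable M N I}, ∀ s ∈ c, s ⊆ ub := by
    intro c hcS hc
    rcases c.eq_empty_or_nonempty with rfl | hne
    · exact ⟨∅, stable_empty M N, by simp⟩
    · exact ⟨⋃₀ c, stable_sUnion_chain hc hne fun I hI => hcS hI,
        fun s hs => subset_sUnion_of_mem hs⟩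
  obtain ⟨I, hImax⟩ := zorn_subset {I | Stable M N I} hub
  have hIst : Stable M N I := hImax.prop
  refine ⟨I, hIst, fun J hJst => ?_⟩
  have hubT : ∀ c ⊆ {K | M.Indep K ∧ N.Indep K ∧ I ⊆ K ∧ K ⊆ I ∪ J},
      IsChain (· ⊆ ·) c → c.Nonempty →
      ∃ ub ∈ {K | M.Indep K ∧ N.Indep K ∧ I ⊆ K ∧ K ⊆ I ∪ J}, ∀ s ∈ c, s ⊆ ub := by
    intro c hcT hc hne
    exact ⟨⋃₀ c, ⟨indep_sUnion_chain hc hne fun K hK => (hcT hK).1,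
      indep_sUnion_chain hc hne fun K hK => (hcT hK).2.1,
      ((hcT hne.choose_spec).2.2.1).trans (subset_sUnion_of_mem hne.choose_spec),
      sUnion_subset fun K hK => (hcT hK).2.2.2⟩, fun s hs => subset_sUnion_of_mem hs⟩
  obtain ⟨K, hIK, hKmax⟩ := zorn_subset_nonempty
    {K | M.Indep K ∧ N.Indep K ∧ I ⊆ K ∧ K ⊆ I ∪ J} hubT I
    ⟨hIst.1, hIst.2.1, subset_rfl, subset_union_left⟩
  obtain ⟨hKM, hKN, hIK', hKIJ⟩ := hKmax.prop
  have hKE : K ⊆ M.E := hKM.subset_ground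
  have hJE : J ⊆ M.E := by rw [hE]; exact hJst.2.1.subset_ground
  have hKIsub : K \ I ⊆ J := fun x bx => (hKIJ bx.1).resolve_left fun h => bx.2 h
  -- Part 1 : J is spanned by K in M
  have hJcl : J ⊆ M.closure K := by
    intro j hj
    by_contra hjcl
    have hjK : j ∉ K := fun h => hjcl (M.subset_closure K hKE h)
    have hMins : M.Indep (insert j K) :=
      (hKM.insert_indep_iff_of_notMem hjK).2 ⟨hJE hj, hjcl⟩
    have hIins : I ⊆ insert j K := hIK'.trans (subset_insert j K)
    have hNins : N.Indep (insert j K) := by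
      have happ := hIst.apply (J := insert j K \ I) (diff_subset.trans hMins.subset_ground)
        disjoint_sdiff_left (by rw [diff_union_of_subset hIins]; exact hMins)
        (hJst.2.1.subset ?_)
      · rwa [diff_union_of_subset hIins] at happ
      · rintro x ⟨hx, hxI⟩
        rcases hx with rfl | hxK
        · exact hj
        · exact hKIsub ⟨hxK, hxI⟩
    have hmem : insert j K ∈ {K | M.Indep K ∧ N.Indep K ∧ I ⊆ K ∧ K ⊆ I ∪ J} :=
      ⟨hMins, hNins, hIins, insert_subset (Or.inr hj) hKIJ⟩
    exact hjK (hKmax.2 hmem (subset_insert j K) (mem_insert j K))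
  -- Part 2 : K is stable
  have hKst : Stable M N K := by
    refine ⟨hKM, hKN, fun L hLE hLM hLN => ?_⟩
    obtain ⟨hLK, hMLK⟩ := (con_indep_iff hKM).1 hLM
    have hMKL : M.Indep (K ∪ L) := by rwa [union_comm] at hMLK
    have hLcl : Disjoint L (M.closure K) := by
      rw [disjoint_left]
      intro l hl hlcl
      have hlK : l ∉ K := disjoint_left.1 hLK hl
      have hins : M.Indep (insert l K) :=
        hMKL.subset (insert_subset (Or.inr hl) subset_union_left)
      exact ((hKM.insert_indep_iff_of_notMem hlK).1 hins).2 hlcl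
    have hMJL : M.Indep (J ∪ L) := indep_union_of_subset_closure hMKL hLcl hJst.1 hJcl
    have hNLJ : N.Indep (L ∪ J) := hJst.apply (hLE.trans diff_subset)
      (hLcl.mono_right hJcl) (by rwa [union_comm] at hMJL) hLN
    have heq : ((K \ I) ∪ L) ∪ I = K ∪ L := by
      rw [union_right_comm, diff_union_of_subset hIK']
    have hP : N.Indep (((K \ I) ∪ L) ∪ I) := by
      refine hIst.apply ?_ ?_ ?_ ?_
      · exact union_subset (diff_subset.trans hKE) (hLE.trans diff_subset)
      · exact disjoint_union_left.2 ⟨disjoint_sdiff_left, hLcl.mono_right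
          (hIK'.trans (M.subset_closure K hKE))⟩
      · rw [heq]; exact hMKL
      · exact hNLJ.subset (union_subset (hKIsub.trans subset_union_right) subset_union_left)
    rw [heq] at hP
    exact (con_indep_iff hKN).2 ⟨hLK, by rwa [union_comm] at hP⟩
  have hKI : K ⊆ I := hImax.2 hKst hIK
  exact hJcl.trans (M.closure_subset_closure hKI)


end AZ
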